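/- Let α₁,…,αₙ be pairwise distinct elements of a field F with n ≥ 3, and set uᵢ = ∏_{j≠i}(αᵢ - αⱼ)⁻¹. Then for every integer h ≥ n-1, ∑_{i=1}^n uᵢ αᵢ^h equals the complete homogeneous symmetric polynomial S_{h-n+1}(α₁,…,αₙ) of degree h-n+1. -/

import Mathlib

open Polynomial Finset

/-- The complete homogeneous symmetric polynomial of degree `t` evaluated at `x`. -/
def hsym {F : Type*} [CommRing F] (n : ℕ) (x : Fin n → F) (t : ℕ) : F :=
  ∑ f ∈ Finset.Nat.antidiagonalTuple n t, ∏ i, x i ^ f i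

lemma Stmt1.geom {F : Type*} [CommRing F] (a : F) :
    ((1 - C a * X : F[X]) : PowerSeries F) * PowerSeries.mk (fun k => a ^ k) = 1 := by
  have : ((1 - C a * X : F[X]) : PowerSeries F)
      = 1 - PowerSeries.C a * PowerSeries.X := by
    push_cast [Polynomial.coe_sub, Polynomial.coe_one, Polynomial.coe_mul, Polynomial.coe_C,
      Polynomial.coe_X]
    rfl
  rw [this]
  ext k
  rw [sub_mul, one_mul, map_sub, mul_assoc]
  cases k with
  | zero => simp
  | succ k =>
    simp [PowerSeries.coeff_C_mul, PowerSeries.coeff_succ_X_mul, pow_succ, mul_comm,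
      PowerSeries.coeff_one]

lemma Stmt1.reverse_X_sub_C {F : Type*} [CommRing F] [Nontrivial F] (a : F) :
    (X - C a : F[X]).reverse = 1 - C a * X := by
  rw [Polynomial.reverse, Polynomial.natDegree_X_sub_C]
  have : (X - C a : F[X]) = X ^ 1 - C a * X ^ 0 := by rw [pow_one, pow_zero, mul_one]
  rw [this, reflect_sub, reflect_monomial, Polynomial.reflect_C_mul_X_pow]
  simp

lemma Stmt1.reverse_prod {F : Type*} [CommRing F] [NoZeroDivisors F] {ι : Type*}
    (s : Finset ι) (f : ι → F[X]) :
    (∏ j ∈ s, f j).reverse = ∏ j ∈ s, (f j).reverse := by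
  induction s using Finset.cons_induction with
  | empty => simpa using Polynomial.reverse_C (1:F)
  | cons a s ha ih => rw [prod_cons, prod_cons, Polynomial.reverse_mul_of_domain, ih]

lemma Stmt1.hsym_coeff {F : Type*} [CommRing F] (n : ℕ) (x : Fin n → F) (t : ℕ) :
    hsym n x t = PowerSeries.coeff t (∏ j, PowerSeries.mk fun k => x j ^ k) := by
  rw [PowerSeries.coeff_prod, hsym]
  refine Finset.sum_nbij' (fun f => Finsupp.equivFunOnFinite.symm f) (fun l => ⇑l) ?_ ?_ ?_ ?_ ?_
  · intro f hf
    rw [Finset.mem_finsuppAntidiag]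
    refine ⟨?_, subset_univ _⟩
    simpa [Finset.Nat.mem_antidiagonalTuple] using hf
  · intro l hl
    rw [Finset.mem_finsuppAntidiag] at hl
    simpa [Finset.Nat.mem_antidiagonalTuple] using hl.1
  · intro f _; exact Finsupp.equivFunOnFinite.apply_symm_apply f
  · intro l _; simp
  · intro f _
    simp only [PowerSeries.coeff_mk, Finsupp.equivFunOnFinite.apply_symm_apply f]
    exact Finset.prod_congr rfl fun i _ => by
      rw [show (Finsupp.equivFunOnFinite.symm f) i = f i from congrFun (Finsupp.equivFunOnFinite.apply_symm_apply f) i]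

lemma Stmt1.hsym_zero {F : Type*} [CommRing F] (n : ℕ) (x : Fin n → F) : hsym n x 0 = 1 := by
  simp [hsym, Finset.Nat.antidiagonalTuple_zero_right]

lemma Stmt1.hsym_rec {F : Type*} [Field F] {n : ℕ} (α : Fin n → F) (m : ℕ) :
    ∑ a ∈ range (m + 2),
      ((∏ j, (X - C (α j)) : F[X]).reverse.coeff a) * hsym n α (m + 1 - a) = 0 := by
  have h1 : (((∏ j, (X - C (α j)) : F[X]).reverse : F[X]) : PowerSeries F)
      * ∏ j, PowerSeries.mk (fun k => α j ^ k) = 1 := by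
    rw [Stmt1.reverse_prod]
    have hcoe : (((∏ j, (X - C (α j) : F[X]).reverse : F[X])) : PowerSeries F)
        = ∏ j, ((X - C (α j) : F[X]).reverse : PowerSeries F) := by
      simp only [← Polynomial.coeToPowerSeries.ringHom_apply, map_prod]
    rw [hcoe]
    rw [← Finset.prod_mul_distrib]
    refine Finset.prod_eq_one fun i _ => ?_
    rw [Stmt1.reverse_X_sub_C]
    exact Stmt1.geom (α i)
  have h2 := congrArg (PowerSeries.coeff (m + 1)) h1
  rw [PowerSeries.coeff_mul, Finset.Nat.sum_antidiagonal_eq_sum_range_succ_mk] at h2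
  simp only [Polynomial.coeff_coe, ← Stmt1.hsym_coeff, PowerSeries.coeff_one] at h2
  simpa using h2

lemma Stmt1.base {F : Type*} [Field F] {n : ℕ} (α : Fin n → F)
    (hα : Function.Injective α) (u : Fin n → F)
    (hu : ∀ i, u i = ∏ j ∈ Finset.univ.erase i, (α i - α j)⁻¹)
    {h : ℕ} (hh : h < n) :
    ∑ i, u i * α i ^ h = if n - 1 = h then 1 else 0 := by
  have hinj : Set.InjOn α (univ : Finset (Fin n)) := fun a _ b _ hab => hα hab
  have hcard : (univ : Finset (Fin n)).card = n := by simp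
  have hdeg : (X ^ h : F[X]).degree < (univ : Finset (Fin n)).card := by
    rw [degree_X_pow, hcard]; exact_mod_cast hh
  have hinterp := Lagrange.eq_interpolate (v := α) hinj hdeg
  have hb : ∀ i, (Lagrange.basis univ α i).coeff (n - 1) = u i := by
    intro i
    have hnd : (Lagrange.basis univ α i).natDegree = n - 1 := by
      rw [Lagrange.natDegree_basis hinj (mem_univ i), hcard]
    rw [← hnd, Polynomial.coeff_natDegree, Lagrange.basis, Polynomial.leadingCoeff_prod, hu]
    refine prod_congr rfl fun j hj => ?_
    rw [Lagrange.basisDivisor, leadingCoeff_mul, leadingCoeff_C,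
      (monic_X_sub_C (α j)).leadingCoeff, mul_one]
  have hco := congrArg (fun p => Polynomial.coeff p (n - 1)) hinterp
  simp only [Lagrange.interpolate_apply, Polynomial.finset_sum_coeff, coeff_C_mul,
    eval_pow, eval_X, coeff_X_pow, hb] at hco
  have hcomm : ∑ i, u i * α i ^ h = ∑ i, α i ^ h * u i :=
    Finset.sum_congr rfl fun i _ => mul_comm _ _
  rw [hcomm, ← hco]

theorem stmt_1 {F : Type*} [Field F] (n : ℕ) (hn : 3 ≤ n) (α : Fin n → F)
    (hα : Function.Injective α) (u : Fin n → F)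
    (hu : ∀ i, u i = ∏ j ∈ Finset.univ.erase i, (α i - α j)⁻¹)
    (h : ℕ) (hh : n - 1 ≤ h) :
    ∑ i, u i * α i ^ h = hsym n α (h + 1 - n) := by
  set P : F[X] := ∏ j, (X - C (α j)) with hP
  have hPmonic : P.Monic := monic_prod_of_monic _ _ fun i _ => monic_X_sub_C _
  have hPdeg : P.natDegree = n := by
    rw [hP, natDegree_prod _ _ fun i _ => X_sub_C_ne_zero (α i)]
    simp [natDegree_X_sub_C]
  have hPn : P.coeff n = 1 := by
    have := hPmonic.coeff_natDegree
    rwa [hPdeg] at this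
  -- coefficients of the reverse
  have hQ : ∀ a ≤ n, P.reverse.coeff a = P.coeff (n - a) := by
    intro a ha
    rw [Polynomial.coeff_reverse, hPdeg, Polynomial.revAt_le ha]
  have hQ0 : ∀ a, n < a → P.reverse.coeff a = 0 := by
    intro a ha
    rw [Polynomial.coeff_reverse, hPdeg, Polynomial.revAt_eq_self_of_lt ha]
    exact Polynomial.coeff_eq_zero_of_natDegree_lt (hPdeg ▸ ha)
  -- power recurrence
  have hpow : ∀ (i : Fin n) (m : ℕ),
      α i ^ (m + n) = -∑ k ∈ range n, P.coeff k * α i ^ (m + k) := by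
    intro i m
    have hev : P.eval (α i) = 0 := by
      rw [hP, eval_prod]
      exact prod_eq_zero (mem_univ i) (by simp)
    rw [eval_eq_sum_range, hPdeg, Finset.sum_range_succ, hPn, one_mul] at hev
    have hn' : α i ^ n = -∑ k ∈ range n, P.coeff k * α i ^ k :=
      eq_neg_of_add_eq_zero_right hev
    calc α i ^ (m + n) = α i ^ m * α i ^ n := by rw [pow_add]
      _ = α i ^ m * -∑ k ∈ range n, P.coeff k * α i ^ k := by rw [hn']
      _ = -∑ k ∈ range n, P.coeff k * α i ^ (m + k) := by
          rw [mul_neg, Finset.mul_sum]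
          congr 1
          exact Finset.sum_congr rfl fun k _ => by rw [pow_add]; ring
  -- the big claim
  have hG : ∀ m : ℕ, ∑ k ∈ range (n + 1),
      P.coeff k * (if n ≤ m + k + 1 then hsym n α (m + k + 1 - n) else 0) = 0 := by
    intro m
    have hrefl := Finset.sum_range_reflect
      (fun k => P.coeff k * (if n ≤ m + k + 1 then hsym n α (m + k + 1 - n) else 0)) (n + 1)
    rw [← hrefl]
    -- now sum over j of P.coeff (n - j) * g (m + (n - j))
    have hmain : ∑ j ∈ range (n + 1),
        P.coeff (n + 1 - 1 - j) * (if n ≤ m + (n + 1 - 1 - j) + 1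
          then hsym n α (m + (n + 1 - 1 - j) + 1 - n) else 0)
        = ∑ a ∈ range (m + 2), P.reverse.coeff a * hsym n α (m + 1 - a) := by
      have hsub1 : range (min (n + 1) (m + 2)) ⊆ range (n + 1) :=
        Finset.range_subset_range.mpr (min_le_left _ _)
      have hsub2 : range (min (n + 1) (m + 2)) ⊆ range (m + 2) :=
        Finset.range_subset_range.mpr (min_le_right _ _)
      rw [← Finset.sum_subset hsub1, ← Finset.sum_subset hsub2]
      · refine Finset.sum_congr rfl fun j hj => ?_
        rw [Finset.mem_range, lt_min_iff] at hj
        obtain ⟨hj1, hj2⟩ := hj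
        rw [hQ j (by omega), if_pos (by omega)]
        congr 2 <;> omega
      · intro a ha hna
        rw [Finset.mem_range] at ha
        rw [Finset.mem_range, lt_min_iff, not_and_or] at hna
        have : n < a := by omega
        rw [hQ0 a this, zero_mul]
      · intro j hj hnj
        rw [Finset.mem_range] at hj
        rw [Finset.mem_range, lt_min_iff, not_and_or] at hnj
        have : m + 1 < j := by omega
        rw [if_neg (by omega), mul_zero]
    rw [hmain]
    exact Stmt1.hsym_rec α m
  -- main strong induction
  have key : ∀ h : ℕ, ∑ i, u i * α i ^ h
      = if n ≤ h + 1 then hsym n α (h + 1 - n) else 0 := by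
    intro h
    induction h using Nat.strong_induction_on with
    | _ h ih =>
      rcases lt_or_ge h n with hlt | hge
      · rw [Stmt1.base α hα u hu hlt]
        by_cases hc : n ≤ h + 1
        · rw [if_pos hc, show h + 1 - n = 0 by omega, Stmt1.hsym_zero, if_pos (by omega)]
        · rw [if_neg hc, if_neg (by omega)]
      · obtain ⟨m, rfl⟩ : ∃ m, h = m + n := ⟨h - n, by omega⟩
        have hT : ∑ i, u i * α i ^ (m + n)
            = -∑ k ∈ range n, P.coeff k * ∑ i, u i * α i ^ (m + k) := by
          calc ∑ i, u i * α i ^ (m + n)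
              = ∑ i, -∑ k ∈ range n, P.coeff k * (u i * α i ^ (m + k)) := by
                refine Finset.sum_congr rfl fun i _ => ?_
                rw [hpow i m, mul_neg, Finset.mul_sum]
                congr 1
                exact Finset.sum_congr rfl fun k _ => by ring
            _ = -∑ k ∈ range n, P.coeff k * ∑ i, u i * α i ^ (m + k) := by
                rw [Finset.sum_neg_distrib, Finset.sum_comm]
                congr 1
                exact Finset.sum_congr rfl fun k _ => by rw [Finset.mul_sum]
        rw [hT, Finset.sum_congr rfl
          (fun k hk => by rw [ih (m + k) (by rw [Finset.mem_range] at hk; omega)] :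
            ∀ k ∈ range n, P.coeff k * ∑ i, u i * α i ^ (m + k)
              = P.coeff k * (if n ≤ m + k + 1 then hsym n α (m + k + 1 - n) else 0))]
        rw [if_pos (by omega : n ≤ m + n + 1)]
        have hGm := hG m
        rw [Finset.sum_range_succ, hPn, one_mul, if_pos (by omega : n ≤ m + n + 1)] at hGm
        linear_combination -hGm
  rw [key h, if_pos (by omega)]
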